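/- Let r₁, r₃, r₄ ∈ ℝ² be pairwise distinct. Then the solution set of the linear system B₁ + B₃ + B₄ = 0, B₁ r₁ + B₃ r₃ + B₄ r₄ = 0, where each Bⱼ ranges over 2×2 matrices of the form [[a, −b], [b, a]], is a 2-dimensional ℝ-subspace of the space of triples (B₁, B₃, B₄). -/

import Mathlib

open Matrix

noncomputable def Lmap (A3 B3 A1 B1 A4 B4 : ℝ) :
    (ℝ × ℝ) →ₗ[ℝ] (Matrix (Fin 2) (Fin 2) ℝ × Matrix (Fin 2) (Fin 2) ℝ × Matrix (Fin 2) (Fin 2) ℝ) where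
  toFun su := (!![su.1*A3 - su.2*B3, -(su.1*B3 + su.2*A3); su.1*B3 + su.2*A3, su.1*A3 - su.2*B3],
               !![su.1*A1 - su.2*B1, -(su.1*B1 + su.2*A1); su.1*B1 + su.2*A1, su.1*A1 - su.2*B1],
               !![su.1*A4 - su.2*B4, -(su.1*B4 + su.2*A4); su.1*B4 + su.2*A4, su.1*A4 - su.2*B4])
  map_add' x y := by
    refine Prod.ext ?_ (Prod.ext ?_ ?_) <;>
    · ext i j
      fin_cases i <;> fin_cases j <;> simp [Matrix.add_apply] <;> ring
  map_smul' c x := by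
    refine Prod.ext ?_ (Prod.ext ?_ ?_) <;>
    · ext i j
      fin_cases i <;> fin_cases j <;> simp [Matrix.smul_apply] <;> ring

theorem stmt_12 (r₁ r₃ r₄ : Fin 2 → ℝ)
    (h13 : r₁ ≠ r₃) (h14 : r₁ ≠ r₄) (h34 : r₃ ≠ r₄) :
    ∃ W : Submodule ℝ
        (Matrix (Fin 2) (Fin 2) ℝ × Matrix (Fin 2) (Fin 2) ℝ × Matrix (Fin 2) (Fin 2) ℝ),
      (↑W : Set (Matrix (Fin 2) (Fin 2) ℝ × Matrix (Fin 2) (Fin 2) ℝ × Matrix (Fin 2) (Fin 2) ℝ)) =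
        {T : Matrix (Fin 2) (Fin 2) ℝ × Matrix (Fin 2) (Fin 2) ℝ × Matrix (Fin 2) (Fin 2) ℝ |
             (∃ a b : ℝ, T.1 = !![a, -b; b, a]) ∧
             (∃ a b : ℝ, T.2.1 = !![a, -b; b, a]) ∧
             (∃ a b : ℝ, T.2.2 = !![a, -b; b, a]) ∧
             T.1 + T.2.1 + T.2.2 = 0 ∧
             T.1.mulVec r₁ + T.2.1.mulVec r₃ + T.2.2.mulVec r₄ = 0} ∧
      Module.finrank ℝ W = 2 := by
  have hD : (r₃ 0 - r₄ 0) ^ 2 + (r₃ 1 - r₄ 1) ^ 2 ≠ 0 := by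
    intro h
    have h0 : r₃ 0 = r₄ 0 := by nlinarith [sq_nonneg (r₃ 0 - r₄ 0), sq_nonneg (r₃ 1 - r₄ 1)]
    have h1 : r₃ 1 = r₄ 1 := by nlinarith [sq_nonneg (r₃ 0 - r₄ 0), sq_nonneg (r₃ 1 - r₄ 1)]
    exact h34 (funext fun i => by fin_cases i <;> assumption)
  have hinj : Function.Injective
      (Lmap (r₃ 0 - r₄ 0) (r₃ 1 - r₄ 1) (r₄ 0 - r₁ 0) (r₄ 1 - r₁ 1) (r₁ 0 - r₃ 0) (r₁ 1 - r₃ 1)) := by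
    rw [← LinearMap.ker_eq_bot, LinearMap.ker_eq_bot']
    rintro ⟨s, u⟩ h
    have e1 : s * (r₃ 0 - r₄ 0) - u * (r₃ 1 - r₄ 1) = 0 := by
      have := congrFun (congrFun (congrArg Prod.fst h) 0) 0
      simpa [Lmap] using this
    have e2 : s * (r₃ 1 - r₄ 1) + u * (r₃ 0 - r₄ 0) = 0 := by
      have := congrFun (congrFun (congrArg Prod.fst h) 1) 0
      simpa [Lmap] using this
    have hs : s * ((r₃ 0 - r₄ 0) ^ 2 + (r₃ 1 - r₄ 1) ^ 2) = 0 := by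
      linear_combination (r₃ 0 - r₄ 0) * e1 + (r₃ 1 - r₄ 1) * e2
    have hu : u * ((r₃ 0 - r₄ 0) ^ 2 + (r₃ 1 - r₄ 1) ^ 2) = 0 := by
      linear_combination (r₃ 0 - r₄ 0) * e2 - (r₃ 1 - r₄ 1) * e1
    have hs0 : s = 0 := by rcases mul_eq_zero.mp hs with h' | h' <;> [exact h'; exact absurd h' hD]
    have hu0 : u = 0 := by rcases mul_eq_zero.mp hu with h' | h' <;> [exact h'; exact absurd h' hD]
    simp [hs0, hu0, Prod.ext_iff]
  refine ⟨LinearMap.range (Lmap (r₃ 0 - r₄ 0) (r₃ 1 - r₄ 1) (r₄ 0 - r₁ 0) (r₄ 1 - r₁ 1)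
      (r₁ 0 - r₃ 0) (r₁ 1 - r₃ 1)), ?_, ?_⟩
  · ext T
    simp only [SetLike.mem_coe, LinearMap.mem_range, Set.mem_setOf_eq]
    constructor
    · rintro ⟨⟨s, u⟩, rfl⟩
      refine ⟨⟨_, _, rfl⟩, ⟨_, _, rfl⟩, ⟨_, _, rfl⟩, ?_, ?_⟩
      · ext i j
        fin_cases i <;> fin_cases j <;> simp [Lmap, Matrix.add_apply] <;> ring
      · funext i
        fin_cases i <;>
          simp [Lmap, Matrix.mulVec, dotProduct, Fin.sum_univ_two, Pi.add_apply] <;> ring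
    · rintro ⟨⟨a₁, b₁, h1⟩, ⟨a₃, b₃, h3⟩, ⟨a₄, b₄, h4⟩, hsum, hvec⟩
      obtain ⟨M1, M3, M4⟩ := T
      simp only at h1 h3 h4 hsum hvec ⊢
      subst h1 h3 h4
      have ea : a₁ + a₃ + a₄ = 0 := by
        have := congrFun (congrFun hsum 0) 0; simpa using this
      have eb : b₁ + b₃ + b₄ = 0 := by
        have := congrFun (congrFun hsum 1) 0; simpa using this
      have ev0 : a₁ * r₁ 0 + -b₁ * r₁ 1 + (a₃ * r₃ 0 + -b₃ * r₃ 1) + (a₄ * r₄ 0 + -b₄ * r₄ 1) = 0 := by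
        have := congrFun hvec 0
        simpa [Matrix.mulVec, dotProduct, Fin.sum_univ_two] using this
      have ev1 : b₁ * r₁ 0 + a₁ * r₁ 1 + (b₃ * r₃ 0 + a₃ * r₃ 1) + (b₄ * r₄ 0 + a₄ * r₄ 1) = 0 := by
        have := congrFun hvec 1
        simpa [Matrix.mulVec, dotProduct, Fin.sum_univ_two] using this
      have E1 : a₁ * (r₁ 0 - r₄ 0) - b₁ * (r₁ 1 - r₄ 1)
          + a₃ * (r₃ 0 - r₄ 0) - b₃ * (r₃ 1 - r₄ 1) = 0 := by
        linear_combination ev0 - r₄ 0 * ea + r₄ 1 * eb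
      have E2 : b₁ * (r₁ 0 - r₄ 0) + a₁ * (r₁ 1 - r₄ 1)
          + b₃ * (r₃ 0 - r₄ 0) + a₃ * (r₃ 1 - r₄ 1) = 0 := by
        linear_combination ev1 - r₄ 0 * eb - r₄ 1 * ea
      set D : ℝ := (r₃ 0 - r₄ 0) ^ 2 + (r₃ 1 - r₄ 1) ^ 2 with hDdef
      set s : ℝ := (a₁ * (r₃ 0 - r₄ 0) + b₁ * (r₃ 1 - r₄ 1)) / D with hsdef
      set u : ℝ := (b₁ * (r₃ 0 - r₄ 0) - a₁ * (r₃ 1 - r₄ 1)) / D with hudef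
      have hx1 : s * (r₃ 0 - r₄ 0) - u * (r₃ 1 - r₄ 1) = a₁ := by
        rw [hsdef, hudef]; field_simp; ring
      have hy1 : s * (r₃ 1 - r₄ 1) + u * (r₃ 0 - r₄ 0) = b₁ := by
        rw [hsdef, hudef]; field_simp; ring
      have hx3 : s * (r₄ 0 - r₁ 0) - u * (r₄ 1 - r₁ 1) = a₃ := by
        rw [hsdef, hudef]
        rw [div_mul_eq_mul_div, div_mul_eq_mul_div, div_sub_div_same, div_eq_iff hD]
        linear_combination (-(r₃ 0 - r₄ 0)) * E1 - (r₃ 1 - r₄ 1) * E2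
      have hy3 : s * (r₄ 1 - r₁ 1) + u * (r₄ 0 - r₁ 0) = b₃ := by
        rw [hsdef, hudef]
        rw [div_mul_eq_mul_div, div_mul_eq_mul_div, ← add_div, div_eq_iff hD]
        linear_combination (-(r₃ 0 - r₄ 0)) * E2 + (r₃ 1 - r₄ 1) * E1
      have hx4 : s * (r₁ 0 - r₃ 0) - u * (r₁ 1 - r₃ 1) = a₄ := by
        have : s * (r₁ 0 - r₃ 0) - u * (r₁ 1 - r₃ 1)
            = -(s * (r₃ 0 - r₄ 0) - u * (r₃ 1 - r₄ 1)) - (s * (r₄ 0 - r₁ 0) - u * (r₄ 1 - r₁ 1)) := by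
          ring
        rw [this, hx1, hx3]; linarith
      have hy4 : s * (r₁ 1 - r₃ 1) + u * (r₁ 0 - r₃ 0) = b₄ := by
        have : s * (r₁ 1 - r₃ 1) + u * (r₁ 0 - r₃ 0)
            = -(s * (r₃ 1 - r₄ 1) + u * (r₃ 0 - r₄ 0)) - (s * (r₄ 1 - r₁ 1) + u * (r₄ 0 - r₁ 0)) := by
          ring
        rw [this, hy1, hy3]; linarith
      refine ⟨⟨s, u⟩, ?_⟩
      refine Prod.ext ?_ (Prod.ext ?_ ?_) <;> simp only [Lmap, LinearMap.coe_mk, AddHom.coe_mk]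
      · rw [hx1, hy1]
      · rw [hx3, hy3]
      · rw [hx4, hy4]
  · rw [LinearMap.finrank_range_of_inj hinj]
    simp [Module.finrank_prod]
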